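/- Let Γ be a connected graph on n vertices which is a union of complete subgraphs Γ_1, ..., Γ_k satisfying: (ii) Γ_i and Γ_j intersect in at most one vertex for i ≠ j, (iii) every vertex belongs to at most two of the Γ_i, and (iv) Σ_{i=1}^k (|Γ_i| - 1) = n - 1. If moreover each Γ_i has at most 3 vertices, then every cycle of Γ is a triangle contained in some Γ_i. -/

import Mathlib

open SimpleGraph Sum List


namespace Stmt18

variable {W : Type*}

lemma delete_edge_connected {G : SimpleGraph W} {v w : W}
    (hG : G.Connected) (hr : (G \ SimpleGraph.fromEdgeSet {s(v, w)}).Reachable v w) :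
    (G \ SimpleGraph.fromEdgeSet {s(v, w)}).Connected := by
  haveI := hG.nonempty
  refine ⟨fun a b => ?_⟩
  obtain ⟨p⟩ := hG.preconnected a b
  induction p with
  | nil => exact Reachable.refl _
  | @cons a c b h p ih =>
    refine Reachable.trans ?_ ih
    by_cases he : s(a, c) = s(v, w)
    · rw [Sym2.eq_iff] at he
      rcases he with ⟨rfl, rfl⟩ | ⟨rfl, rfl⟩
      · exact hr
      · exact hr.symm
    · exact Adj.reachable (by simp [sdiff_adj, fromEdgeSet_adj, he, h, h.ne])

lemma connected_card_le [Fintype W] :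
    ∀ (m : ℕ) (G : SimpleGraph W) [Fintype G.edgeSet],
      G.edgeFinset.card = m → G.Connected → Fintype.card W ≤ m + 1 := by
  intro m
  induction m using Nat.strong_induction_on with
  | _ m IH =>
  intro G _ hm hG
  classical
  by_cases hac : G.IsAcyclic
  · have := IsTree.card_edgeFinset (G := G) ⟨hG, hac⟩
    omega
  · rw [IsAcyclic] at hac
    push_neg at hac
    obtain ⟨u, c, hc⟩ := hac
    have hlen : c.edges.length = c.length := c.length_edges
    have h3 := hc.three_le_length
    have hne : c.edges ≠ [] := by
      intro h; rw [h] at hlen; simp at hlen; omega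
    obtain ⟨e, he⟩ := List.exists_mem_of_ne_nil _ hne
    revert he
    induction e using Sym2.ind with
    | _ a b =>
    intro he
    have hadj : G.Adj a b := c.adj_of_mem_edges he
    have hreach : (G \ SimpleGraph.fromEdgeSet {s(a, b)}).Reachable a b := by
      by_contra hnr
      have hbr : G.IsBridge s(a, b) := isBridge_iff.2 hnr
      rw [isBridge_iff_adj_and_forall_cycle_notMem (by exact hadj)] at hbr
      exact hbr c hc he
    set G' := G \ SimpleGraph.fromEdgeSet {s(a, b)} with hG'
    haveI : Fintype G'.edgeSet := Fintype.ofFinite _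
    have hes : G'.edgeSet = G.edgeSet \ {s(a, b)} := by
      rw [hG', edgeSet_sdiff, edgeSet_fromEdgeSet, edgeSet_sdiff_sdiff_isDiag]
    have hef : G'.edgeFinset = G.edgeFinset.erase s(a, b) := by
      ext x
      simp only [mem_edgeFinset, Finset.mem_erase, hes, Set.mem_diff, Set.mem_singleton_iff]
      tauto
    have hmem : s(a, b) ∈ G.edgeFinset := by simpa using hadj
    have hcard : G'.edgeFinset.card = m - 1 := by
      rw [hef, Finset.card_erase_of_mem hmem, hm]
    have hm1 : 1 ≤ m := by
      rw [← hm]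
      exact Finset.card_pos.2 ⟨_, hmem⟩
    have := IH (m - 1) (by omega) G' hcard (delete_edge_connected hG hreach)
    omega

lemma acyclic_of_card [Fintype W] (G : SimpleGraph W) [Fintype G.edgeSet]
    (hG : G.Connected) (hcard : G.edgeFinset.card + 1 = Fintype.card W) : G.IsAcyclic := by
  intro u c hc
  classical
  have hlen : c.edges.length = c.length := c.length_edges
  have h3 := hc.three_le_length
  have hne : c.edges ≠ [] := by
    intro h; rw [h] at hlen; simp at hlen; omega
  obtain ⟨e, he⟩ := List.exists_mem_of_ne_nil _ hne
  revert he
  induction e using Sym2.ind with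
  | _ a b =>
  intro he
  have hadj : G.Adj a b := c.adj_of_mem_edges he
  have hreach : (G \ SimpleGraph.fromEdgeSet {s(a, b)}).Reachable a b := by
    by_contra hnr
    have hbr : G.IsBridge s(a, b) := isBridge_iff.2 hnr
    rw [isBridge_iff_adj_and_forall_cycle_notMem (by exact hadj)] at hbr
    exact hbr c hc he
  set G' := G \ SimpleGraph.fromEdgeSet {s(a, b)} with hG'
  haveI : Fintype G'.edgeSet := Fintype.ofFinite _
  have hes : G'.edgeSet = G.edgeSet \ {s(a, b)} := by
    rw [hG', edgeSet_sdiff, edgeSet_fromEdgeSet, edgeSet_sdiff_sdiff_isDiag]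
  have hef : G'.edgeFinset = G.edgeFinset.erase s(a, b) := by
    ext x
    simp only [mem_edgeFinset, Finset.mem_erase, hes, Set.mem_diff, Set.mem_singleton_iff]
    tauto
  have hmem : s(a, b) ∈ G.edgeFinset := by simpa using hadj
  have hcard' : G'.edgeFinset.card = G.edgeFinset.card - 1 := by
    rw [hef, Finset.card_erase_of_mem hmem]
  have hm1 : 1 ≤ G.edgeFinset.card := Finset.card_pos.2 ⟨_, hmem⟩
  have := connected_card_le (G.edgeFinset.card - 1) G' hcard' (delete_edge_connected hG hreach)
  omega

variable {G : SimpleGraph W}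


lemma getVert_support_getElem? {u v : W} (p : G.Walk u v) :
    ∀ {n : ℕ}, n ≤ p.length → p.support[n]? = some (p.getVert n) := by
  induction p with
  | nil =>
    intro n hn
    simp only [SimpleGraph.Walk.length_nil, Nat.le_zero] at hn
    subst hn
    rfl
  | cons h p ih =>
    intro n hn
    match n with
    | 0 => simp
    | n + 1 =>
      rw [SimpleGraph.Walk.support_cons]
      simpa [SimpleGraph.Walk.getVert_cons_succ] using ih (by simpa using hn)

lemma cycle_getVert_inj {v : W} {w : G.Walk v v} (hw : w.IsCycle) {a b : ℕ}
    (ha : a < w.length) (hb : b < w.length) (h : w.getVert a = w.getVert b) : a = b := by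
  have hnd : w.support.tail.Nodup := hw.2
  have hlen : w.support.tail.length = w.length := by
    have := w.length_support
    have h2 : w.support.length = w.support.tail.length + 1 := by
      rw [w.support_eq_cons]; rfl
    omega
  set a' := if a = 0 then w.length else a with ha'
  set b' := if b = 0 then w.length else b with hb'
  have hga : w.getVert a' = w.getVert a := by
    rw [ha']; split
    · rw [w.getVert_length, ‹a = 0›, w.getVert_zero]
    · rfl
  have hgb : w.getVert b' = w.getVert b := by
    rw [hb']; split
    · rw [w.getVert_length, ‹b = 0›, w.getVert_zero]
    · rfl
  have ha1 : 1 ≤ a' ∧ a' ≤ w.length := by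
    rw [ha']; split <;> omega
  have hb1 : 1 ≤ b' ∧ b' ≤ w.length := by
    rw [hb']; split <;> omega
  have hta : w.support.tail[a' - 1]? = some (w.getVert a') := by
    have := getVert_support_getElem? w ha1.2
    rw [w.support_eq_cons] at this
    rw [show a' = (a' - 1) + 1 by omega, List.getElem?_cons_succ] at this
    rwa [show (a' - 1) + 1 = a' by omega] at this
  have htb : w.support.tail[b' - 1]? = some (w.getVert b') := by
    have := getVert_support_getElem? w hb1.2
    rw [w.support_eq_cons] at this
    rw [show b' = (b' - 1) + 1 by omega, List.getElem?_cons_succ] at this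
    rwa [show (b' - 1) + 1 = b' by omega] at this
  have : a' - 1 = b' - 1 := by
    refine (List.getElem?_inj (by omega) hnd).1 ?_
    rw [hta, htb, hga, hgb, h]
  have : a' = b' := by omega
  rw [ha', hb'] at this
  split at this <;> split at this <;> omega

variable {V : Type*} {k : ℕ}

/-- Incidence graph between vertices and cliques. -/
def incGraph (C : Fin k → Finset V) : SimpleGraph (V ⊕ Fin k) where
  Adj a b := match a, b with
    | Sum.inl v, Sum.inr i => v ∈ C i
    | Sum.inr i, Sum.inl v => v ∈ C i
    | _, _ => False
  symm := ⟨by rintro (v | i) (w | j) h <;> simp_all⟩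
  loopless := ⟨by rintro (v | i) h <;> simp_all⟩

@[simp] lemma incGraph_adj_inl_inr {C : Fin k → Finset V} {v : V} {i : Fin k} :
    (incGraph C).Adj (inl v) (inr i) ↔ v ∈ C i := Iff.rfl

@[simp] lemma incGraph_adj_inr_inl {C : Fin k → Finset V} {v : V} {i : Fin k} :
    (incGraph C).Adj (inr i) (inl v) ↔ v ∈ C i := Iff.rfl

@[simp] lemma incGraph_adj_inl_inl {C : Fin k → Finset V} {v w : V} :
    ¬ (incGraph C).Adj (inl v) (inl w) := fun h => h

@[simp] lemma incGraph_adj_inr_inr {C : Fin k → Finset V} {i j : Fin k} :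
    ¬ (incGraph C).Adj (inr i) (inr j) := fun h => h

lemma incGraph_card_edgeFinset [DecidableEq V] [Fintype V] (C : Fin k → Finset V)
    [Fintype (incGraph C).edgeSet] :
    (incGraph C).edgeFinset.card = ∑ i, (C i).card := by
  classical
  rw [← Finset.card_sigma]
  refine (Finset.card_bij (fun x _ => s(inl x.2, inr x.1)) ?_ ?_ ?_).symm
  · rintro ⟨i, v⟩ hx
    simp only [Finset.mem_sigma, Finset.mem_univ, true_and] at hx
    simpa [mem_edgeFinset] using hx
  · rintro ⟨i, v⟩ hx ⟨j, w⟩ hy h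
    simp only [Sym2.eq, Sym2.rel_iff', Prod.mk.injEq, inl.injEq, inr.injEq] at h
    aesop
  · intro e he
    induction e using Sym2.ind with
    | _ a b =>
    rw [mem_edgeFinset, mem_edgeSet] at he
    match a, b, he with
    | Sum.inl v, Sum.inr i, he =>
      exact ⟨⟨i, v⟩, by simpa using he, rfl⟩
    | Sum.inr i, Sum.inl v, he =>
      exact ⟨⟨i, v⟩, by simpa using he, Sym2.eq_swap⟩

lemma incGraph_adj_of_mem₁ {C : Fin k → Finset V} {v : V} {i : Fin k} (h : v ∈ C i) :
    (incGraph C).Adj (inl v) (inr i) := h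

lemma incGraph_adj_of_mem₂ {C : Fin k → Finset V} {v : V} {i : Fin k} (h : v ∈ C i) :
    (incGraph C).Adj (inr i) (inl v) := h

end Stmt18

/-- Let `Γ` be a connected graph on `n` vertices which is the union of complete subgraphs
`Γ_1, …, Γ_k` (each on at most 3 vertices) such that (ii) two distinct `Γ_i` meet in at most one
vertex, (iii) every vertex belongs to at most two of the `Γ_i`, and
(iv) `Σ (|Γ_i| - 1) = n - 1`. Then every cycle of `Γ` is a triangle contained in some `Γ_i`. -/
theorem stmt_18 {V : Type*} [Fintype V] [DecidableEq V] {n k : ℕ}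
    (Γ : SimpleGraph V) (hn : Fintype.card V = n) (hconn : Γ.Connected)
    (C : Fin k → Finset V)
    (hnonempty : ∀ i, (C i).Nonempty)
    (hclique : ∀ i, ∀ u ∈ C i, ∀ v ∈ C i, u ≠ v → Γ.Adj u v)
    (hcover : ∀ u v : V, Γ.Adj u v → ∃ i, u ∈ C i ∧ v ∈ C i)
    (hii : ∀ i j, i ≠ j → (C i ∩ C j).card ≤ 1)
    (hiii : ∀ v : V, (Finset.univ.filter fun i => v ∈ C i).card ≤ 2)
    (hiv : ∑ i, ((C i).card - 1) = n - 1)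
    (hsize : ∀ i, (C i).card ≤ 3) :
    ∀ (v : V) (w : Γ.Walk v v), w.IsCycle →
      w.length = 3 ∧ ∃ i, ∀ u ∈ w.support, u ∈ C i := by
  classical
  open Stmt18 Sum SimpleGraph in
  intro v w hw
  haveI : Nonempty V := hconn.nonempty
  haveI : Fintype (incGraph C).edgeSet := Fintype.ofFinite _
  -- H is connected
  have lift : ∀ {u w' : V} (p : Γ.Walk u w'), (incGraph C).Reachable (inl u) (inl w') := by
    intro u w' p
    induction p with
    | nil => exact Reachable.refl _
    | @cons a c b h p ih =>
      obtain ⟨i, hi1, hi2⟩ := hcover _ _ h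
      exact ((Adj.reachable (incGraph_adj_of_mem₁ hi1)).trans
        (Adj.reachable (incGraph_adj_of_mem₂ hi2))).trans ih
  have hHconn : (incGraph C).Connected := by
    haveI : Nonempty (V ⊕ Fin k) := ⟨inl (Classical.arbitrary V)⟩
    refine ⟨fun a b => ?_⟩
    have toInl : ∀ a : V ⊕ Fin k, ∃ u : V, (incGraph C).Reachable a (inl u) := by
      rintro (u | i)
      · exact ⟨u, Reachable.refl _⟩
      · obtain ⟨u, hu⟩ := hnonempty i
        exact ⟨u, Adj.reachable (incGraph_adj_of_mem₂ hu)⟩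
    obtain ⟨u, hu⟩ := toInl a
    obtain ⟨u', hu'⟩ := toInl b
    obtain ⟨p⟩ := hconn.preconnected u u'
    exact (hu.trans (lift p)).trans hu'.symm
  -- edge count of H
  have hn1 : 1 ≤ n := by rw [← hn]; exact Fintype.card_pos
  have hedge : (incGraph C).edgeFinset.card = n - 1 + k := by
    rw [incGraph_card_edgeFinset C]
    have h1 : ∀ i ∈ (Finset.univ : Finset (Fin k)), (C i).card = ((C i).card - 1) + 1 := by
      intro i _
      have := Finset.card_pos.2 (hnonempty i)
      omega
    rw [Finset.sum_congr rfl h1, Finset.sum_add_distrib, hiv]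
    simp
  have hacyc : (incGraph C).IsAcyclic := by
    refine acyclic_of_card (incGraph C) hHconn ?_
    rw [hedge, Fintype.card_sum, hn, Fintype.card_fin]
    omega
  -- chain walks in H
  have chain : ∀ (x : ℕ → V) (g : ℕ → Fin k) (b a : ℕ), a ≤ b →
      (∀ t, a ≤ t → t < b → x t ∈ C (g t) ∧ x (t + 1) ∈ C (g t)) →
      ∃ W : (incGraph C).Walk (inl (x a)) (inl (x b)),
        W.support = inl (x a) :: ((List.range' a (b - a)).flatMap
          fun t => [inr (g t), inl (x (t + 1))]) := by
    intro x g b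
    induction b with
    | zero =>
      intro a ha _
      obtain rfl : a = 0 := by omega
      exact ⟨SimpleGraph.Walk.nil, by simp⟩
    | succ b IHb =>
      intro a ha hmem
      rcases Nat.eq_or_lt_of_le ha with rfl | hlt
      · exact ⟨SimpleGraph.Walk.nil, by simp⟩
      · have hab : a ≤ b := by omega
        obtain ⟨W, hWs⟩ := IHb a hab (fun t h1 h2 => hmem t h1 (by omega))
        have hb1 : x b ∈ C (g b) := (hmem b hab (by omega)).1
        have hb2 : x (b + 1) ∈ C (g b) := (hmem b hab (by omega)).2
        refine ⟨W.append (SimpleGraph.Walk.cons (incGraph_adj_of_mem₁ hb1)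
          (SimpleGraph.Walk.cons (incGraph_adj_of_mem₂ hb2)
            SimpleGraph.Walk.nil)), ?_⟩
        rw [SimpleGraph.Walk.support_append, hWs]
        rw [show b + 1 - a = (b - a) + 1 by omega, List.range'_concat,
          show a + 1 * (b - a) = b by omega]
        simp
  -- the key combinatorial lemma
  have key : ∀ m : ℕ, ∀ x : ℕ → V, 3 ≤ m → (∀ t, t < m → Γ.Adj (x t) (x (t + 1))) →
      x m = x 0 → (∀ a, a < m → ∀ b, b < m → x a = x b → a = b) →
      m = 3 ∧ ∃ i, ∀ t, t ≤ m → x t ∈ C i := by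
    intro m
    induction m using Nat.strong_induction_on with
    | _ m IHm =>
    intro x hm hadj hxm hinj
    have hgx : ∀ t : ℕ, ∃ i, x (min t (m - 1)) ∈ C i ∧ x (min t (m - 1) + 1) ∈ C i :=
      fun t => hcover _ _ (hadj _ (by omega))
    set g : ℕ → Fin k := fun t => (hgx t).choose with hgdef
    have hg : ∀ t, t < m → x t ∈ C (g t) ∧ x (t + 1) ∈ C (g t) := by
      intro t ht
      have hmin : min t (m - 1) = t := min_eq_left (by omega)
      have h : ∀ j : Fin k, (x (min t (m - 1)) ∈ C j ∧ x (min t (m - 1) + 1) ∈ C j) →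
          x t ∈ C j ∧ x (t + 1) ∈ C j := by
        rw [hmin]
        exact fun j hj => hj
      exact h _ (hgx t).choose_spec
    by_cases hcons : ∃ t, t < m ∧ g t = g ((t + 1) % m)
    · -- Case A : two consecutive edges in the same clique
      obtain ⟨t, ht, hgt⟩ := hcons
      rcases Nat.lt_or_ge m 4 with h4 | h4
      · -- m = 3
        obtain rfl : m = 3 := by omega
        interval_cases t
        · norm_num at hgt
          refine ⟨rfl, g 0, fun s hs => ?_⟩
          interval_cases s
          · exact (hg 0 (by omega)).1
          · exact (hg 0 (by omega)).2
          · rw [hgt]; exact (hg 1 (by omega)).2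
          · rw [hxm]; exact (hg 0 (by omega)).1
        · norm_num at hgt
          refine ⟨rfl, g 1, fun s hs => ?_⟩
          interval_cases s
          · rw [← hxm, hgt]; exact (hg 2 (by omega)).2
          · exact (hg 1 (by omega)).1
          · exact (hg 1 (by omega)).2
          · rw [hgt]; exact (hg 2 (by omega)).2
        · norm_num at hgt
          refine ⟨rfl, g 2, fun s hs => ?_⟩
          interval_cases s
          · rw [← hxm]; exact (hg 2 (by omega)).2
          · rw [hgt]; exact (hg 0 (by omega)).2
          · exact (hg 2 (by omega)).1
          · exact (hg 2 (by omega)).2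
      · -- m ≥ 4 : derive a contradiction by shortcutting to a shorter cycle
        exfalso
        set y : ℕ → V := fun s => x ((t + s) % m) with hydef
        have hm0 : 0 < m := by omega
        have hy0 : y 0 = x t := by
          show x ((t + 0) % m) = x t
          rw [Nat.add_zero, Nat.mod_eq_of_lt ht]
        have hym : y m = y 0 := by
          show x ((t + m) % m) = x ((t + 0) % m)
          rw [Nat.add_mod_right, Nat.add_zero]
        have hystep : ∀ s, y (s + 1) = x ((t + s) % m + 1) := by
          intro s
          show x ((t + (s + 1)) % m) = x ((t + s) % m + 1)
          rw [show t + (s + 1) = (t + s) + 1 by omega, Nat.add_mod (t + s) 1 m,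
            Nat.mod_eq_of_lt (show 1 < m by omega)]
          have hr : (t + s) % m < m := Nat.mod_lt _ hm0
          rcases Nat.lt_or_ge ((t + s) % m + 1) m with h | h
          · rw [Nat.mod_eq_of_lt h]
          · have he : (t + s) % m + 1 = m := by omega
            rw [he, Nat.mod_self, hxm]
        have hyadj : ∀ s, s < m → Γ.Adj (y s) (y (s + 1)) := by
          intro s hs
          rw [hystep]
          exact hadj _ (Nat.mod_lt _ hm0)
        have hyinj : ∀ a, a < m → ∀ b, b < m → y a = y b → a = b := by
          intro a ha b hb h
          have h2 : (t + a) % m = (t + b) % m :=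
            hinj _ (Nat.mod_lt _ hm0) _ (Nat.mod_lt _ hm0) h
          have h3 : a % m = b % m := Nat.ModEq.add_left_cancel' t h2
          rwa [Nat.mod_eq_of_lt ha, Nat.mod_eq_of_lt hb] at h3
        set i := g t with hidef
        have hmem0 : y 0 ∈ C i := by rw [hy0]; exact (hg t ht).1
        have hmem1 : y 1 ∈ C i := by
          have h1 : y 1 = x (t + 1) := by
            show x ((t + 1) % m) = x (t + 1)
            rcases Nat.lt_or_ge (t + 1) m with h | h
            · rw [Nat.mod_eq_of_lt h]
            · have he : t + 1 = m := by omega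
              rw [he, Nat.mod_self, hxm]
          rw [h1]
          exact (hg t ht).2
        have hmem2 : y 2 ∈ C i := by
          have h1 : y 2 = x ((t + 1) % m + 1) := by
            show x ((t + 2) % m) = x ((t + 1) % m + 1)
            have hr : (t + 1) % m < m := Nat.mod_lt _ hm0
            rw [show t + 2 = (t + 1) + 1 by omega, Nat.add_mod (t + 1) 1 m,
              Nat.mod_eq_of_lt (show 1 < m by omega)]
            rcases Nat.lt_or_ge ((t + 1) % m + 1) m with h | h
            · rw [Nat.mod_eq_of_lt h]
            · have he : (t + 1) % m + 1 = m := by omega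
              rw [he, Nat.mod_self, hxm]
          rw [h1, hgt]
          exact (hg ((t + 1) % m) (Nat.mod_lt _ hm0)).2
        -- shortcut sequence
        set x' : ℕ → V := fun s => if s = 0 then y 0 else y (s + 1) with hx'def
        have hx'0 : x' 0 = y 0 := rfl
        have hx's : ∀ s, s ≠ 0 → x' s = y (s + 1) := by
          intro s hs
          simp only [hx'def, if_neg hs]
        have hadj' : ∀ s, s < m - 1 → Γ.Adj (x' s) (x' (s + 1)) := by
          intro s hs
          rcases eq_or_ne s 0 with rfl | hs0
          · rw [hx'0, hx's 1 (by omega)]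
            have hne : y 0 ≠ y 2 := fun h => by
              have := hyinj 0 (by omega) 2 (by omega) h
              omega
            exact hclique i _ hmem0 _ hmem2 hne
          · rw [hx's s hs0, hx's (s + 1) (by omega)]
            exact hyadj (s + 1) (by omega)
        have hx'm : x' (m - 1) = x' 0 := by
          rw [hx's (m - 1) (by omega), show m - 1 + 1 = m by omega, hym, hx'0]
        have hinj' : ∀ a, a < m - 1 → ∀ b, b < m - 1 → x' a = x' b → a = b := by
          intro a ha b hb h
          rcases eq_or_ne a 0 with rfl | ha0 <;> rcases eq_or_ne b 0 with rfl | hb0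
          · rfl
          · rw [hx'0, hx's b hb0] at h
            have := hyinj 0 (by omega) (b + 1) (by omega) h
            omega
          · rw [hx's a ha0, hx'0] at h
            have := hyinj (a + 1) (by omega) 0 (by omega) h
            omega
          · rw [hx's a ha0, hx's b hb0] at h
            have := hyinj (a + 1) (by omega) (b + 1) (by omega) h
            omega
        obtain ⟨hm3, j, hj⟩ := IHm (m - 1) (by omega) x' (by omega) hadj' hx'm hinj'
        obtain rfl : m = 4 := by omega
        -- y 0, y 2, y 3 ∈ C j
        have hj0 : y 0 ∈ C j := by rw [← hx'0]; exact hj 0 (by omega)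
        have hj2 : y 2 ∈ C j := by rw [← hx's 1 (by omega)]; exact hj 1 (by omega)
        have hj3 : y 3 ∈ C j := by rw [← hx's 2 (by omega)]; exact hj 2 (by omega)
        -- y 3 ∉ C i
        have hne : ∀ a, a < 4 → ∀ b, b < 4 → a ≠ b → y a ≠ y b := by
          intro a ha b hb hab h
          exact hab (hyinj a (by omega) b (by omega) h)
        have hy3i : y 3 ∉ C i := by
          intro hmem3
          have hsub : ({y 0, y 1, y 2, y 3} : Finset V) ⊆ C i := by
            intro z hz
            simp only [Finset.mem_insert, Finset.mem_singleton] at hz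
            rcases hz with rfl | rfl | rfl | rfl
            exacts [hmem0, hmem1, hmem2, hmem3]
          have hcard : ({y 0, y 1, y 2, y 3} : Finset V).card = 4 := by
            rw [Finset.card_insert_of_notMem (by
              simp only [Finset.mem_insert, Finset.mem_singleton]
              push_neg
              exact ⟨hne 0 (by omega) 1 (by omega) (by omega),
                hne 0 (by omega) 2 (by omega) (by omega),
                hne 0 (by omega) 3 (by omega) (by omega)⟩),
              Finset.card_insert_of_notMem (by
              simp only [Finset.mem_insert, Finset.mem_singleton]
              push_neg
              exact ⟨hne 1 (by omega) 2 (by omega) (by omega),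
                hne 1 (by omega) 3 (by omega) (by omega)⟩),
              Finset.card_insert_of_notMem (by
              simp only [Finset.mem_singleton]
              exact hne 2 (by omega) 3 (by omega) (by omega)),
              Finset.card_singleton]
          have := Finset.card_le_card hsub
          have := hsize i
          omega
        have hij : i ≠ j := fun h => hy3i (h ▸ hj3)
        have hsub2 : ({y 0, y 2} : Finset V) ⊆ C i ∩ C j := by
          intro z hz
          simp only [Finset.mem_insert, Finset.mem_singleton] at hz
          rcases hz with rfl | rfl
          · exact Finset.mem_inter.2 ⟨hmem0, hj0⟩
          · exact Finset.mem_inter.2 ⟨hmem2, hj2⟩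
        have hcard2 : ({y 0, y 2} : Finset V).card = 2 := by
          rw [Finset.card_insert_of_notMem (by
            simp only [Finset.mem_singleton]
            exact hne 0 (by omega) 2 (by omega) (by omega)), Finset.card_singleton]
        have := Finset.card_le_card hsub2
        have := hii i j hij
        omega
    · -- Case B : all consecutive cliques distinct; contradiction with the tree H
      exfalso
      push_neg at hcons
      have hm0 : 0 < m := by omega
      -- all cliques along the cycle are distinct
      have gdist : ∀ a b, a < m → b < m → a ≠ b → g a ≠ g b := by
        have aux : ∀ a b, a < b → b < m → g a = g b → False := by
          intro a b hab hbm heq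
          have hab2 : a + 1 ≠ b := by
            intro h
            have := hcons a (by omega)
            rw [Nat.mod_eq_of_lt (by omega : a + 1 < m), h] at this
            exact this heq
          have hmemb1 : x ((b + 1) % m) ∈ C (g a) := by
            rcases Nat.lt_or_ge (b + 1) m with h | h
            · rw [Nat.mod_eq_of_lt h, heq]; exact (hg b hbm).2
            · have he : b + 1 = m := by omega
              rw [he, Nat.mod_self, ← hxm, ← he, heq]
              exact (hg b hbm).2
          have hb0 : (b + 1) % m ≠ a := by
            intro h
            have h2 := hcons b hbm
            rw [h] at h2
            exact h2 heq.symm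
          have hc : (b + 1) % m = if b + 1 = m then 0 else b + 1 := by
            split
            · rw [‹b + 1 = m›, Nat.mod_self]
            · exact Nat.mod_eq_of_lt (by omega)
          set c := (b + 1) % m with hcdef
          have hcm : c < m := Nat.mod_lt _ hm0
          have hdist : a ≠ a + 1 ∧ a ≠ b ∧ a ≠ c ∧ a + 1 ≠ b ∧ a + 1 ≠ c ∧ b ≠ c := by
            rw [hc] at hb0 ⊢
            split at hb0 <;> [skip; skip] <;> (try split) <;> omega
          have hnex : ∀ p q, p < m → q < m → p ≠ q → x p ≠ x q := by
            intro p q hp hq hpq h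
            exact hpq (hinj p hp q hq h)
          have hsub : ({x a, x (a + 1), x b, x c} : Finset V) ⊆ C (g a) := by
            intro z hz
            simp only [Finset.mem_insert, Finset.mem_singleton] at hz
            rcases hz with rfl | rfl | rfl | rfl
            · exact (hg a (by omega)).1
            · exact (hg a (by omega)).2
            · rw [heq]; exact (hg b hbm).1
            · exact hmemb1
          have ham : a + 1 < m := by omega
          have hcard : ({x a, x (a + 1), x b, x c} : Finset V).card = 4 := by
            rw [Finset.card_insert_of_notMem (by
              simp only [Finset.mem_insert, Finset.mem_singleton]
              push_neg
              exact ⟨hnex a (a+1) (by omega) ham hdist.1,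
                hnex a b (by omega) hbm hdist.2.1, hnex a c (by omega) hcm hdist.2.2.1⟩),
              Finset.card_insert_of_notMem (by
              simp only [Finset.mem_insert, Finset.mem_singleton]
              push_neg
              exact ⟨hnex (a+1) b ham hbm hdist.2.2.2.1, hnex (a+1) c ham hcm hdist.2.2.2.2.1⟩),
              Finset.card_insert_of_notMem (by
              simp only [Finset.mem_singleton]
              exact hnex b c hbm hcm hdist.2.2.2.2.2),
              Finset.card_singleton]
          have := Finset.card_le_card hsub
          have := hsize (g a)
          omega
        intro a b ha hb hab heq
        rcases Nat.lt_or_ge a b with h | h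
        · exact aux a b h hb heq
        · exact aux b a (by omega) ha heq.symm
      -- build the two H-paths
      obtain ⟨W1, hW1⟩ := chain x g 1 0 (by omega) (fun t h1 h2 => hg t (by omega))
      obtain ⟨W2, hW2⟩ := chain x g m 1 (by omega) (fun t h1 h2 => hg t h2)
      have hP1 : W1.IsPath := by
        rw [SimpleGraph.Walk.isPath_def, hW1]
        have : x 0 ≠ x 1 := fun h => by
          have := hinj 0 (by omega) 1 (by omega) h
          omega
        simp [List.range'_one, this]
      have hW2nd : W2.support.Nodup := by
        rw [hW2, List.nodup_cons]
        constructor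
        · intro hmem
          rw [List.mem_flatMap] at hmem
          obtain ⟨t, htmem, hm'⟩ := hmem
          rw [List.mem_range'] at htmem
          obtain ⟨it, hit, rfl⟩ := htmem
          simp only [List.mem_cons, List.mem_singleton, List.not_mem_nil, or_false] at hm'
          rcases hm' with h | h
          · exact (Sum.inl_ne_inr h).elim
          · have hx : x 1 = x (1 + 1 * it + 1) := inl.inj h
            rcases Nat.lt_or_ge (1 + 1 * it + 1) m with hlt | hge
            · have := hinj 1 (by omega) _ hlt hx
              omega
            · have he : 1 + 1 * it + 1 = m := by omega
              rw [he, hxm] at hx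
              have := hinj 1 (by omega) 0 (by omega) hx
              omega
        · rw [List.nodup_flatMap]
          refine ⟨fun t _ => by simp, ?_⟩
          refine (List.pairwise_lt_range' (s := 1) (n := m - 1) 1).imp_of_mem ?_
          intro a b hamem hbmem hab
          rw [List.mem_range'] at hamem hbmem
          obtain ⟨ia, hia, rfl⟩ := hamem
          obtain ⟨ib, hib, rfl⟩ := hbmem
          set a := 1 + 1 * ia with hadef
          set b := 1 + 1 * ib with hbdef
          intro z hz hz'
          simp only [List.mem_cons, List.mem_singleton, List.not_mem_nil, or_false] at hz hz'
          rcases hz with rfl | rfl <;> rcases hz' with h | h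
          · exact gdist a b (by omega) (by omega) (by omega) (inr.inj h)
          · exact (Sum.inr_ne_inl h).elim
          · exact (Sum.inl_ne_inr h).elim
          · have hx : x (a + 1) = x (b + 1) := inl.inj h
            rcases Nat.lt_or_ge (b + 1) m with hlt | hge
            · have := hinj (a + 1) (by omega) (b + 1) hlt hx
              omega
            · have he : b + 1 = m := by omega
              rw [he, hxm] at hx
              have := hinj (a + 1) (by omega) 0 (by omega) hx
              omega
      have hxm' : x m = x 0 := hxm
      set W2' := (W2.copy rfl (by rw [hxm'])).reverse with hW2'def
      have hP2 : W2'.IsPath := by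
        rw [hW2'def, SimpleGraph.Walk.isPath_reverse_iff, SimpleGraph.Walk.isPath_def,
          SimpleGraph.Walk.support_copy]
        exact hW2nd
      have heqp := hacyc.path_unique ⟨W1, hP1⟩ ⟨W2', hP2⟩
      have heqw : W1 = W2' := Subtype.ext_iff.mp heqp
      have hl1 : W1.support.length = 3 := by
        rw [hW1]
        simp [List.range'_one]
      have hl2 : W2'.support.length = 1 + 2 * (m - 1) := by
        rw [hW2'def, SimpleGraph.Walk.support_reverse, List.length_reverse,
          SimpleGraph.Walk.support_copy, hW2]
        simp only [List.length_cons, List.length_flatMap]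
        have hsum : ∀ l : List ℕ,
            (l.map (List.length ∘ fun t => ([inr (g t), inl (x (t + 1))] : List (V ⊕ Fin k)))).sum
              = 2 * l.length := by
          intro l
          induction l with
          | nil => simp
          | cons a l ih =>
            simp only [List.map_cons, List.sum_cons, ih, List.length_cons]
            simp [Function.comp]
            omega
        simp [List.length_range']
        omega
      rw [heqw, hl2] at hl1
      omega
  -- apply the key lemma to the cycle
  have hm := hw.three_le_length
  have hkey := key w.length w.getVert hm (fun t ht => w.adj_getVert_succ ht)
    (by rw [w.getVert_length, w.getVert_zero])
    (fun a ha b hb h => cycle_getVert_inj hw ha hb h)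
  obtain ⟨hlen3, i, hi⟩ := hkey
  refine ⟨hlen3, i, ?_⟩
  intro u hu
  rw [SimpleGraph.Walk.mem_support_iff_exists_getVert] at hu
  obtain ⟨t, ht1, ht2⟩ := hu
  rw [← ht1]
  exact hi t ht2
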